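/- Let α be a countable type. Then there exists a function Φ : α → ℝ such that the map from finite subsets of α to ℝ sending a finite set X to ∑_{x ∈ X} Φ(x) is injective; i.e., for all finite sets X, Y ⊆ α, if ∑_{x ∈ X} Φ(x) = ∑_{y ∈ Y} Φ(y) then X = Y. -/
import Mathlib

theorem exists_injective_sum_encoder (α : Type*) [Countable α] :
    ∃ Φ : α → ℝ, ∀ X Y : Finset α,
      ∑ x ∈ X, Φ x = ∑ y ∈ Y, Φ y → X = Y := by
  obtain ⟨e, he⟩ := Countable.exists_injective_nat α
  refine ⟨fun x => (2 : ℝ) ^ (e x), fun X Y h => ?_⟩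
  have h' : ((∑ x ∈ X, 2 ^ (e x) : ℕ) : ℝ) = ((∑ y ∈ Y, 2 ^ (e y) : ℕ) : ℝ) := by
    push_cast; exact h
  have hn : ∑ x ∈ X, 2 ^ (e x) = ∑ y ∈ Y, 2 ^ (e y) := Nat.cast_injective h'
  have hX : ∑ x ∈ X, 2 ^ (e x) = ∑ i ∈ X.image e, 2 ^ i :=
    (Finset.sum_image (fun a _ b _ hab => he hab)).symm
  have hY : ∑ y ∈ Y, 2 ^ (e y) = ∑ i ∈ Y.image e, 2 ^ i :=
    (Finset.sum_image (fun a _ b _ hab => he hab)).symm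
  have himg : X.image e = Y.image e := by
    have := congrArg (fun n => Nat.bitIndices n |>.toFinset) (hX ▸ hY ▸ hn)
    simpa using this
  exact Finset.image_injective he himg
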